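/- If G is a p-sphere and H is a q-sphere, then the Zykov join G⊕H is a (p+q+1)-sphere. -/

import Mathlib

open scoped Classical

/-- A finite simple graph: a finite vertex set together with a symmetric, irreflexive
adjacency relation supported on the vertex set. -/
structure FGraph (V : Type) where
  verts : Finset V
  Adj : V → V → Prop
  symm : ∀ {a b}, Adj a b → Adj b a
  loopless : ∀ a, ¬ Adj a a
  mem_of_adj : ∀ {a b}, Adj a b → a ∈ verts

namespace FGraph

variable {V W : Type}

/-- The subgraph induced on the vertices satisfying `P`. -/
noncomputable def induce (G : FGraph V) (P : V → Prop) : FGraph V where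
  verts := G.verts.filter P
  Adj a b := G.Adj a b ∧ P a ∧ P b
  symm h := ⟨G.symm h.1, h.2.2, h.2.1⟩
  loopless a h := G.loopless a h.1
  mem_of_adj h := Finset.mem_filter.mpr ⟨G.mem_of_adj h.1, h.2.1⟩

/-- The unit sphere of a vertex: the subgraph induced on its neighbors. -/
noncomputable def unitSphere (G : FGraph V) (v : V) : FGraph V :=
  G.induce (fun w => G.Adj v w)

/-- The graph with the vertex `v` (and its edges) removed. -/
noncomputable def erase (G : FGraph V) (v : V) : FGraph V :=
  G.induce (fun w => w ≠ v)

/-- Inductive definition of contractibility: the one-point graph is contractible, and a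
graph is contractible if some vertex has a contractible unit sphere and contractible
complement. -/
inductive Contractible : FGraph V → Prop
  | single (G : FGraph V) (v : V) (h : G.verts = {v}) : Contractible G
  | step (G : FGraph V) (v : V) (hv : v ∈ G.verts)
      (h1 : Contractible (G.unitSphere v)) (h2 : Contractible (G.erase v)) :
      Contractible G

mutual
  /-- `G` is a `d`-sphere: the empty graph is the `(-1)`-sphere, and a `d`-manifold is a
  `d`-sphere if removing some vertex renders it contractible. -/
  inductive IsSphere : ℤ → FGraph V → Prop
    | empty (G : FGraph V) (h : G.verts = ∅) : IsSphere (-1) G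
    | punctured (d : ℤ) (G : FGraph V) (hm : IsManifold d G) (v : V) (hv : v ∈ G.verts)
        (hc : Contractible (G.erase v)) : IsSphere d G
  /-- For `d ≥ 0`, `G` is a `d`-manifold iff every unit sphere is a `(d-1)`-sphere. -/
  inductive IsManifold : ℤ → FGraph V → Prop
    | intro (d : ℤ) (hd : 0 ≤ d) (G : FGraph V)
        (h : ∀ v ∈ G.verts, IsSphere (d - 1) (G.unitSphere v)) : IsManifold d G
end

/-- A simplex of `G`: the vertex set of a complete subgraph. -/
def IsSimplex (G : FGraph V) (x : Finset V) : Prop :=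
  x.Nonempty ∧ ↑x ⊆ G.verts ∧ ∀ a ∈ x, ∀ b ∈ x, a ≠ b → G.Adj a b

/-- The Barycentric refinement: vertices are the simplices of `G`, two being adjacent iff
one is strictly contained in the other. -/
noncomputable def barycentric (G : FGraph V) : FGraph (Finset V) where
  verts := G.verts.powerset.filter (fun x => G.IsSimplex x)
  Adj x y := G.IsSimplex x ∧ G.IsSimplex y ∧ (x ⊂ y ∨ y ⊂ x)
  symm h := ⟨h.2.1, h.1, h.2.2.symm⟩
  loopless x h := by rcases h.2.2 with h' | h' <;> exact (ssubset_irrefl x h')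
  mem_of_adj h := Finset.mem_filter.mpr ⟨Finset.mem_powerset.mpr h.1.2.1, h.1⟩

/-- Number of simplices of `G` with exactly `j` vertices (so `numSimplices G (k+1)` is
the `f`-vector entry `f_k(G)`). -/
noncomputable def numSimplices (G : FGraph V) (j : ℕ) : ℕ :=
  (G.verts.powerset.filter (fun x => G.IsSimplex x ∧ x.card = j)).card

/-- Euler characteristic `χ(G) = Σ_{k ≥ 0} (-1)^k f_k(G)`, where `f_k` counts the
simplices with `k+1` vertices. -/
noncomputable def euler (G : FGraph V) : ℤ :=
  ∑ k ∈ Finset.range G.verts.card, (-1 : ℤ) ^ k * G.numSimplices (k + 1)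

/-- The level set `{f = c}`: the subgraph of the Barycentric refinement induced by the
simplices on which `f - c` changes sign. -/
noncomputable def levelSet (G : FGraph V) (f : V → ℝ) (c : ℝ) : FGraph (Finset V) :=
  G.barycentric.induce (fun x => (∃ a ∈ x, f a - c < 0) ∧ (∃ b ∈ x, 0 < f b - c))

/-- Graph isomorphism. -/
def Iso (G : FGraph V) (H : FGraph W) : Prop :=
  ∃ φ : V → W, Set.BijOn φ ↑G.verts ↑H.verts ∧
    ∀ a ∈ G.verts, ∀ b ∈ G.verts, (G.Adj a b ↔ H.Adj (φ a) (φ b))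

/-- Zykov join of two graphs: disjoint union plus all edges between the two parts. -/
noncomputable def join (G : FGraph V) (H : FGraph W) : FGraph (V ⊕ W) where
  verts := G.verts.disjSum H.verts
  Adj a b :=
    match a, b with
    | .inl a, .inl b => G.Adj a b
    | .inr a, .inr b => H.Adj a b
    | .inl a, .inr b => a ∈ G.verts ∧ b ∈ H.verts
    | .inr a, .inl b => b ∈ G.verts ∧ a ∈ H.verts
  symm {a b} h := by
    cases a <;> cases b <;> simp_all <;> first | exact G.symm h | exact H.symm h
  loopless a h := by
    cases a <;> simp_all <;> first | exact G.loopless _ h | exact H.loopless _ h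
  mem_of_adj {a b} h := by
    cases a <;> cases b <;> simp_all [Finset.mem_disjSum] <;>
      first | exact G.mem_of_adj h | exact H.mem_of_adj h

/-- Union of two graphs on the same vertex type. -/
noncomputable def union (G H : FGraph V) : FGraph V where
  verts := G.verts ∪ H.verts
  Adj a b := G.Adj a b ∨ H.Adj a b
  symm h := h.imp G.symm H.symm
  loopless a h := h.elim (G.loopless a) (H.loopless a)
  mem_of_adj h :=
    h.elim (fun h' => Finset.mem_union_left _ (G.mem_of_adj h'))
      (fun h' => Finset.mem_union_right _ (H.mem_of_adj h'))

/-- A `d`-ball: a graph of the form `S - v` for a `d`-sphere `S` and a vertex `v` of `S`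
(up to graph isomorphism). -/
def IsBall (d : ℤ) (H : FGraph W) : Prop :=
  ∃ (S : FGraph ℕ) (v : ℕ), IsSphere d S ∧ v ∈ S.verts ∧ Iso H (S.erase v)

/-- A `d`-manifold with boundary: every unit sphere is a `(d-1)`-sphere or a `(d-1)`-ball. -/
def IsManifoldWithBoundary (d : ℤ) (G : FGraph V) : Prop :=
  ∀ v ∈ G.verts, IsSphere (d - 1) (G.unitSphere v) ∨ IsBall (d - 1) (G.unitSphere v)

/-- The cyclic graph `C_n` on the vertex set `Fin n`. -/
def cycleGraph (n : ℕ) : FGraph (Fin n) where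
  verts := Finset.univ
  Adj a b := a ≠ b ∧ ((a.val + 1) % n = b.val ∨ (b.val + 1) % n = a.val)
  symm h := ⟨h.1.symm, h.2.symm⟩
  loopless a h := h.1 rfl
  mem_of_adj _ := Finset.mem_univ _

/-- `G` is a disjoint union of cyclic graphs `C_n` with `n ≥ 4`: the vertex set splits
into pairwise disjoint pieces, edges never cross between pieces, and each piece induces
a graph isomorphic to a `C_n` with `n ≥ 4`. -/
def IsDisjointUnionOfCycles (G : FGraph V) : Prop :=
  ∃ P : Finset (Finset V),
    (∀ S ∈ P, ↑S ⊆ G.verts) ∧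
    (∀ S ∈ P, ∀ T ∈ P, S ≠ T → Disjoint S T) ∧
    (∀ v ∈ G.verts, ∃ S ∈ P, v ∈ S) ∧
    (∀ a b, G.Adj a b → ∀ S ∈ P, a ∈ S → b ∈ S) ∧
    (∀ S ∈ P, ∃ n, 4 ≤ n ∧ Iso (G.induce (· ∈ S)) (cycleGraph n))

/-- Poincaré–Hopf index `i_f(v) = 1 - χ(S^-_f(v))`. -/
noncomputable def pindex (G : FGraph V) (f : V → ℝ) (v : V) : ℤ :=
  1 - ((G.unitSphere v).induce (fun w => f w < f v)).euler

/-- Curvature `K(v) = Σ_{k ≥ 0} (-1)^k f_{k-1}(S(v))/(k+1)` with `f_{-1} = 1`. -/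
noncomputable def curvature (G : FGraph V) (v : V) : ℝ :=
  ∑ k ∈ Finset.range (G.verts.card + 1),
    (-1 : ℝ) ^ k * (if k = 0 then 1 else ((G.unitSphere v).numSimplices k : ℝ)) / (k + 1)

end FGraph

/-- `sign(a + i b) = sign(a) + i sign(b)`. -/
noncomputable def csgn (z : ℂ) : ℂ :=
  ⟨Real.sign z.re, Real.sign z.im⟩

/-- The set `U = {1+i, 1-i, -1+i, -1-i}` of possible values of `csgn`. -/
noncomputable def signU : Finset ℂ :=
  {1 + Complex.I, 1 - Complex.I, -1 + Complex.I, -1 - Complex.I}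

namespace FGraph

variable {V : Type}

/-- The set of values of `sign(ψ - c)` attained on the finite vertex set `x`. -/
noncomputable def signValues (ψ : V → ℂ) (c : ℂ) (x : Finset V) : Finset ℂ :=
  x.image (fun v => csgn (ψ v - c))

/-- The level set `{ψ = c}` of a complex-valued function: the subgraph of the Barycentric
refinement induced by the simplices on which `sign(ψ - c)` takes at least three distinct
values, including `-1+i` and `1-i`. -/
noncomputable def complexLevelSet (G : FGraph V) (ψ : V → ℂ) (c : ℂ) : FGraph (Finset V) :=
  G.barycentric.induce (fun x =>
    3 ≤ (signValues ψ c x).card ∧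
    (-1 + Complex.I) ∈ signValues ψ c x ∧ (1 - Complex.I) ∈ signValues ψ c x)

/-- The level set `{ψ = 0}_e` for a two-element subset `e ⊆ U`: the subgraph of the
Barycentric refinement induced by the simplices on which `sign(ψ)` attains both values
of `e` and at least three distinct values in total. -/
noncomputable def complexLevelSetE (G : FGraph V) (ψ : V → ℂ) (e : Finset ℂ) :
    FGraph (Finset V) :=
  G.barycentric.induce (fun x =>
    (∀ u ∈ e, u ∈ signValues ψ 0 x) ∧ 3 ≤ (signValues ψ 0 x).card)

/-- `Ψ^{-1}(t)`: the subgraph of the Barycentric refinement induced by the simplices on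
which `sign(ψ)` attains all values of `t`. -/
noncomputable def signPreimage (G : FGraph V) (ψ : V → ℂ) (t : Finset ℂ) :
    FGraph (Finset V) :=
  G.barycentric.induce (fun x => ∀ u ∈ t, u ∈ signValues ψ 0 x)

/-- The sign vectors of `F - c` attained on the finite vertex set `x`. -/
noncomputable def vecSignValues {k : ℕ} (F : V → Fin k → ℝ) (c : Fin k → ℝ)
    (x : Finset V) : Finset (Fin k → ℝ) :=
  x.image (fun v j => Real.sign (F v j - c j))

/-- The level set `{F = c}` of an `ℝ^k`-valued function: the subgraph of the Barycentric
refinement induced by the simplices on which the sign vector of `F - c` takes at least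
`k+1` distinct values, including the `k` vectors `(1,…,1,-1,1,…,1)`. -/
noncomputable def vecLevelSet (G : FGraph V) {k : ℕ} (F : V → Fin k → ℝ) (c : Fin k → ℝ) :
    FGraph (Finset V) :=
  G.barycentric.induce (fun x =>
    k + 1 ≤ (vecSignValues F c x).card ∧
    ∀ j : Fin k, (fun i => if i = j then (-1 : ℝ) else 1) ∈ vecSignValues F c x)

end FGraph

/-- The complete graph on `Fin n`. -/
def completeFGraph (n : ℕ) : FGraph (Fin n) where
  verts := Finset.univ
  Adj a b := a ≠ b
  symm h := h.symm
  loopless a h := h rfl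
  mem_of_adj _ := Finset.mem_univ _

/-- Stirling numbers of the second kind. -/
def stirling2 : ℕ → ℕ → ℕ
  | 0, 0 => 1
  | 0, _ + 1 => 0
  | _ + 1, 0 => 0
  | n + 1, m + 1 => (m + 1) * stirling2 n (m + 1) + stirling2 n m

namespace FGraph
variable {V W : Type}

lemma ext' {G H : FGraph V} (hv : G.verts = H.verts)
    (ha : ∀ a b, G.Adj a b ↔ H.Adj a b) : G = H := by
  cases G; cases H
  have h2 : ∀ {v : Finset V} {A B : V → V → Prop} {s l m} {s' l' m'}, A = B →
      FGraph.mk v A s l m = FGraph.mk v B s' l' m' := by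
    intro v A B s l m s' l' m' h; subst h; rfl
  subst hv
  exact h2 (funext fun a => funext fun b => propext (ha a b))

lemma adj_mem_right (G : FGraph V) {a b : V} (h : G.Adj a b) : b ∈ G.verts :=
  G.mem_of_adj (G.symm h)

lemma join_unitSphere_inl (G : FGraph V) (H : FGraph W) {v : V} (hv : v ∈ G.verts) :
    (G.join H).unitSphere (Sum.inl v) = (G.unitSphere v).join H := by
  apply ext'
  · ext x
    rcases x with a | a <;>
      simp only [unitSphere, induce, Finset.mem_filter] <;>
      simp only [join, Finset.mem_filter, Finset.inl_mem_disjSum,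
        Finset.inr_mem_disjSum] <;>
      tauto
  · intro a b
    rcases a with a | a <;> rcases b with b | b <;>
      simp only [unitSphere, induce, join, Finset.mem_filter]
    all_goals
      first
      | tauto
      | exact ⟨fun h => h.1,
          fun h => ⟨h, ⟨hv, H.mem_of_adj h⟩, hv, adj_mem_right H h⟩⟩


lemma join_unitSphere_inr (G : FGraph V) (H : FGraph W) {w : W} (hw : w ∈ H.verts) :
    (G.join H).unitSphere (Sum.inr w) = G.join (H.unitSphere w) := by
  apply ext'
  · ext x
    rcases x with a | a <;>
      simp only [unitSphere, induce, Finset.mem_filter] <;>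
      simp only [join, Finset.mem_filter, Finset.inl_mem_disjSum,
        Finset.inr_mem_disjSum] <;>
      tauto
  · intro a b
    rcases a with a | a <;> rcases b with b | b <;>
      simp only [unitSphere, induce, join, Finset.mem_filter]
    all_goals
      first
      | tauto
      | exact ⟨fun h => h.1,
          fun h => ⟨h, ⟨G.mem_of_adj h, hw⟩, adj_mem_right G h, hw⟩⟩

lemma join_erase_inl (G : FGraph V) (H : FGraph W) (v : V) :
    (G.join H).erase (Sum.inl v) = (G.erase v).join H := by
  apply ext'
  · ext x
    rcases x with a | a <;>
      simp only [erase, induce, join, Finset.mem_filter, Finset.inl_mem_disjSum,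
        Finset.inr_mem_disjSum, ne_eq, Sum.inl.injEq, reduceCtorEq] <;>
      tauto
  · intro a b
    rcases a with a | a <;> rcases b with b | b <;>
      simp only [erase, induce, join, Finset.mem_filter, ne_eq, Sum.inl.injEq,
        reduceCtorEq, not_false_eq_true, and_true] <;>
      tauto

lemma join_erase_inr (G : FGraph V) (H : FGraph W) (w : W) :
    (G.join H).erase (Sum.inr w) = G.join (H.erase w) := by
  apply ext'
  · ext x
    rcases x with a | a <;>
      simp only [erase, induce, join, Finset.mem_filter, Finset.inl_mem_disjSum,
        Finset.inr_mem_disjSum, ne_eq, Sum.inr.injEq, reduceCtorEq] <;>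
      tauto
  · intro a b
    rcases a with a | a <;> rcases b with b | b <;>
      simp only [erase, induce, join, Finset.mem_filter, ne_eq, Sum.inr.injEq,
        reduceCtorEq, not_false_eq_true, and_true] <;>
      tauto

lemma unitSphere_card_lt (G : FGraph V) {v : V} (hv : v ∈ G.verts) :
    (G.unitSphere v).verts.card < G.verts.card := by
  apply Finset.card_lt_card
  refine ⟨Finset.filter_subset _ _, fun hsub => ?_⟩
  have := Finset.mem_filter.mp (hsub hv)
  exact G.loopless v this.2

lemma erase_card_lt (G : FGraph V) {v : V} (hv : v ∈ G.verts) :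
    (G.erase v).verts.card < G.verts.card := by
  have h1 : (G.erase v).verts ⊆ G.verts := by
    intro x hx
    simp only [erase, induce, Finset.mem_filter] at hx
    exact hx.1
  have h2 : v ∉ (G.erase v).verts := by
    simp [erase, induce]
  exact Finset.card_lt_card ⟨h1, fun hsub => h2 (hsub hv)⟩

lemma cone_left : ∀ (n : ℕ) (H : FGraph W), H.verts.card ≤ n →
    ∀ (G : FGraph V) (v : V), G.verts = {v} → Contractible (G.join H) := by
  intro n
  induction n with
  | zero =>
    intro H hn G v hG
    have hH : H.verts = ∅ := Finset.card_eq_zero.mp (Nat.le_zero.mp hn)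
    apply Contractible.single _ (Sum.inl v)
    ext x
    rcases x with a | a <;>
      simp [join, hG, hH]
  | succ n ih =>
    intro H hn G v hG
    rcases Finset.eq_empty_or_nonempty H.verts with hH | ⟨w, hw⟩
    · apply Contractible.single _ (Sum.inl v)
      ext x
      rcases x with a | a <;> simp [join, hG, hH]
    · apply Contractible.step _ (Sum.inr w)
      · simp [join, hw]
      · rw [join_unitSphere_inr G H hw]
        exact ih _ (by have := unitSphere_card_lt H hw; omega) G v hG
      · rw [join_erase_inr]
        exact ih _ (by have := erase_card_lt H hw; omega) G v hG

lemma cone_right : ∀ (n : ℕ) (G : FGraph V), G.verts.card ≤ n →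
    ∀ (H : FGraph W) (w : W), H.verts = {w} → Contractible (G.join H) := by
  intro n
  induction n with
  | zero =>
    intro G hn H w hH
    have hG : G.verts = ∅ := Finset.card_eq_zero.mp (Nat.le_zero.mp hn)
    apply Contractible.single _ (Sum.inr w)
    ext x
    rcases x with a | a <;> simp [join, hG, hH]
  | succ n ih =>
    intro G hn H w hH
    rcases Finset.eq_empty_or_nonempty G.verts with hG | ⟨v, hv⟩
    · apply Contractible.single _ (Sum.inr w)
      ext x
      rcases x with a | a <;> simp [join, hG, hH]
    · apply Contractible.step _ (Sum.inl v)
      · simp [join, hv]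
      · rw [join_unitSphere_inl G H hv]
        exact ih _ (by have := unitSphere_card_lt G hv; omega) H w hH
      · rw [join_erase_inl]
        exact ih _ (by have := erase_card_lt G hv; omega) H w hH

lemma contr_join_left {G : FGraph V} (hc : Contractible G) (H : FGraph W) :
    Contractible (G.join H) := by
  induction hc with
  | single G v h => exact cone_left H.verts.card H le_rfl G v h
  | step G v hv h1 h2 ih1 ih2 =>
    apply Contractible.step _ (Sum.inl v)
    · simp [join, hv]
    · rw [join_unitSphere_inl G H hv]; exact ih1
    · rw [join_erase_inl]; exact ih2

lemma contr_join_right (G : FGraph V) {H : FGraph W} (hc : Contractible H) :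
    Contractible (G.join H) := by
  induction hc with
  | single H w h => exact cone_right G.verts.card G le_rfl H w h
  | step H w hw h1 h2 ih1 ih2 =>
    apply Contractible.step _ (Sum.inr w)
    · simp [join, hw]
    · rw [join_unitSphere_inr G H hw]; exact ih1
    · rw [join_erase_inr]; exact ih2

lemma sphere_join_right_empty : ∀ (n : ℕ) (G : FGraph V), G.verts.card ≤ n →
    ∀ (H : FGraph W), H.verts = ∅ → ∀ p : ℤ, IsSphere p G → IsSphere p (G.join H) := by
  intro n
  induction n using Nat.strong_induction_on with
  | _ n ih =>
    intro G hn H hH p hG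
    rcases hG with ⟨G, h⟩ | ⟨p, G, hm, v, hv, hc⟩
    · apply IsSphere.empty
      ext x
      rcases x with a | a <;> simp [join, h, hH]
    · apply IsSphere.punctured p _ ?_ (Sum.inl v) (by simp [join, hv])
      · rw [join_erase_inl]
        exact contr_join_left hc H
      · rcases hm with ⟨p, hp, G, hms⟩
        refine IsManifold.intro p hp _ fun x hx => ?_
        rcases x with a | a
        · simp only [join, Finset.inl_mem_disjSum] at hx
          rw [join_unitSphere_inl G H hx]
          have hlt := unitSphere_card_lt G hx
          exact ih (G.unitSphere a).verts.card (by omega) _ le_rfl H hH _ (hms a hx)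
        · simp only [join, Finset.inr_mem_disjSum] at hx
          rw [hH] at hx
          exact absurd hx (Finset.notMem_empty a)

lemma sphere_join_left_empty : ∀ (n : ℕ) (H : FGraph W), H.verts.card ≤ n →
    ∀ (G : FGraph V), G.verts = ∅ → ∀ q : ℤ, IsSphere q H → IsSphere q (G.join H) := by
  intro n
  induction n using Nat.strong_induction_on with
  | _ n ih =>
    intro H hn G hG q hH
    rcases hH with ⟨H, h⟩ | ⟨q, H, hm, w, hw, hc⟩
    · apply IsSphere.empty
      ext x
      rcases x with a | a <;> simp [join, h, hG]
    · apply IsSphere.punctured q _ ?_ (Sum.inr w) (by simp [join, hw])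
      · rw [join_erase_inr]
        exact contr_join_right G hc
      · rcases hm with ⟨q, hq, H, hms⟩
        refine IsManifold.intro q hq _ fun x hx => ?_
        rcases x with a | a
        · simp only [join, Finset.inl_mem_disjSum] at hx
          rw [hG] at hx
          exact absurd hx (Finset.notMem_empty a)
        · simp only [join, Finset.inr_mem_disjSum] at hx
          rw [join_unitSphere_inr G H hx]
          have hlt := unitSphere_card_lt H hx
          exact ih (H.unitSphere a).verts.card (by omega) _ le_rfl G hG _ (hms a hx)

lemma join_spheres_aux : ∀ (n : ℕ) (G : FGraph V) (H : FGraph W),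
    G.verts.card + H.verts.card ≤ n → ∀ p q : ℤ,
    IsSphere p G → IsSphere q H → IsSphere (p + q + 1) (G.join H) := by
  intro n
  induction n using Nat.strong_induction_on with
  | _ n ih =>
    intro G H hn p q hG hH
    rcases Finset.eq_empty_or_nonempty G.verts with hGe | hGne
    · rcases hG with ⟨G, h⟩ | ⟨p, G, hm, v, hv, hc⟩
      · have : -1 + q + 1 = q := by ring
        rw [this]
        exact sphere_join_left_empty H.verts.card H le_rfl G hGe q hH
      · rw [hGe] at hv; exact absurd hv (Finset.notMem_empty v)
    · rcases Finset.eq_empty_or_nonempty H.verts with hHe | hHne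
      · have hq : q = -1 := by
          rcases hH with ⟨H, h⟩ | ⟨q, H, hm, w, hw, hc⟩
          · rfl
          · rw [hHe] at hw; exact absurd hw (Finset.notMem_empty w)
        subst hq
        have : p + -1 + 1 = p := by ring
        rw [this]
        exact sphere_join_right_empty G.verts.card G le_rfl H hHe p hG
      · rcases hG with ⟨G, h⟩ | ⟨p, G, hmG, v, hv, hcG⟩
        · rw [h] at hGne; exact absurd hGne.choose_spec (Finset.notMem_empty _)
        · rcases hH with ⟨H, h⟩ | ⟨q, H, hmH, w, hw, hcH⟩
          · rw [h] at hHne; exact absurd hHne.choose_spec (Finset.notMem_empty _)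
          · apply IsSphere.punctured (p + q + 1) _ ?_ (Sum.inl v) (by simp [join, hv])
            · rw [join_erase_inl]
              exact contr_join_left hcG H
            · rcases hmG with ⟨p, hp, G, hmsG⟩
              rcases hmH with ⟨q, hq, H, hmsH⟩
              refine IsManifold.intro _ (by omega) _ fun x hx => ?_
              rcases x with a | a
              · simp only [join, Finset.inl_mem_disjSum] at hx
                rw [join_unitSphere_inl G H hx]
                have hlt := unitSphere_card_lt G hx
                have := ih ((G.unitSphere a).verts.card + H.verts.card) (by omega) _ _
                  le_rfl (p - 1) q (hmsG a hx) (IsSphere.punctured q H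
                    (IsManifold.intro q hq H hmsH) w hw hcH)
                rwa [show p - 1 + q + 1 = p + q + 1 - 1 by ring] at this
              · simp only [join, Finset.inr_mem_disjSum] at hx
                rw [join_unitSphere_inr G H hx]
                have hlt := unitSphere_card_lt H hx
                have := ih (G.verts.card + (H.unitSphere a).verts.card) (by omega) _ _
                  le_rfl p (q - 1) (IsSphere.punctured p G
                    (IsManifold.intro p hp G hmsG) v hv hcG) (hmsH a hx)
                rwa [show p + (q - 1) + 1 = p + q + 1 - 1 by ring] at this

end FGraph

/-- The Zykov join of a `p`-sphere and a `q`-sphere is a `(p+q+1)`-sphere. -/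
theorem join_spheres {V W : Type} (G : FGraph V) (H : FGraph W) (p q : ℤ)
    (hG : FGraph.IsSphere p G) (hH : FGraph.IsSphere q H) :
    FGraph.IsSphere (p + q + 1) (FGraph.join G H) :=
  FGraph.join_spheres_aux (G.verts.card + H.verts.card) G H le_rfl p q hG hH
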